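/- Let G be a second countable locally compact group, π a unitary representation of G on a separable complex Hilbert space H, and c ∈ Z¹(G,π). Let p ∈ π(G)' be the projection such that the closure of the reduction ideal I(c) in the weak operator topology equals π(G)'p. Then the projected cocycle p·c (for the subrepresentation of π on pH) is evanescent and the projected cocycle (1−p)·c (for the subrepresentation of π on (1−p)H) is irreducible. Moreover, for every projection q ∈ π(G)' such that q·c is evanescent, one has q ≤ p. -/

import Mathlib

noncomputable section

open MeasureTheory Filter Topology Pointwise

namespace Evan

variable {𝕜 : Type} [RCLike 𝕜]
variable {G : Type} [Group G] [TopologicalSpace G] [IsTopologicalGroup G]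
variable {H : Type} [NormedAddCommGroup H] [InnerProductSpace 𝕜 H] [CompleteSpace H]

/-- A continuous unitary (orthogonal, when `𝕜 = ℝ`) representation of `G` on `H`:
a homomorphism into the unitary group which is continuous for the topology
of pointwise norm convergence. -/
structure IsUnitaryRep (π : G →* (H →L[𝕜] H)) : Prop where
  mem_unitary : ∀ g, π g ∈ unitary (H →L[𝕜] H)
  cont : ∀ ξ : H, Continuous fun g => π g ξ

/-- The commutant `π(G)'` of a representation. -/
def commutant (π : G →* (H →L[𝕜] H)) : Set (H →L[𝕜] H) :=
  {T | ∀ g, T * π g = π g * T}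

/-- The bicommutant `π(G)''`, i.e. the von Neumann algebra generated by `π(G)`. -/
def bicommutant (π : G →* (H →L[𝕜] H)) : Set (H →L[𝕜] H) :=
  Set.centralizer (commutant π)

/-- Closure of a set of operators in the weak operator topology. -/
def wotClosure (𝕜 : Type) {H : Type} [RCLike 𝕜] [NormedAddCommGroup H]
    [InnerProductSpace 𝕜 H] (S : Set (H →L[𝕜] H)) : Set (H →L[𝕜] H) :=
  (ContinuousLinearMapWOT.ofCLM : (H →L[𝕜] H) → ContinuousLinearMapWOT (RingHom.id 𝕜) H H) ⁻¹' closure ((ContinuousLinearMapWOT.ofCLM : (H →L[𝕜] H) → ContinuousLinearMapWOT (RingHom.id 𝕜) H H) '' S)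

/-- A continuous `1`-cocycle for the representation `π`. -/
def IsCocycle (π : G →* (H →L[𝕜] H)) (c : G → H) : Prop :=
  Continuous c ∧ ∀ g h : G, c (g * h) = c g + π g (c h)

/-- A coboundary: `c g = ξ - π g ξ` for some `ξ`. -/
def IsCoboundary (π : G →* (H →L[𝕜] H)) (c : G → H) : Prop :=
  ∃ ξ : H, ∀ g : G, c g = ξ - π g ξ

/-- `c` is an almost coboundary: it lies in the closure of the set of coboundaries for
the topology of uniform convergence on compact subsets of `G`. -/
def IsAlmostCoboundary (π : G →* (H →L[𝕜] H)) (c : G → H) : Prop :=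
  ∀ Q : Set G, IsCompact Q → ∀ ε : ℝ, 0 < ε → ∃ ξ : H, ∀ g ∈ Q, ‖c g - (ξ - π g ξ)‖ ≤ ε

/-- The reduction ideal `I(c) = {T ∈ π(G)' : T·c ∈ B¹(G,π)}`. -/
def reductionIdeal (π : G →* (H →L[𝕜] H)) (c : G → H) : Set (H →L[𝕜] H) :=
  {T | T ∈ commutant π ∧ IsCoboundary π fun g => T (c g)}

/-- `c` is evanescent: `I(c)` is dense in `π(G)'` for the weak operator topology. -/
def IsEvanescent (π : G →* (H →L[𝕜] H)) (c : G → H) : Prop :=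
  commutant π ⊆ wotClosure 𝕜 (reductionIdeal π c)

/-- `c` is irreducible: `I(c) = {0}`. -/
def IsIrreducibleCocycle (π : G →* (H →L[𝕜] H)) (c : G → H) : Prop :=
  reductionIdeal π c = {0}

/-- `π` has almost invariant vectors. -/
def HasAlmostInvariantVectors (π : G →* (H →L[𝕜] H)) : Prop :=
  ∀ Q : Set G, IsCompact Q → ∀ ε : ℝ, 0 < ε →
    ∃ ξ : H, ‖ξ‖ = 1 ∧ ∀ g ∈ Q, ‖π g ξ - ξ‖ ≤ ε

/-- `π` is irreducible: the only closed invariant subspaces are `⊥` and `⊤`. -/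
def IsIrreducibleRep (π : G →* (H →L[𝕜] H)) : Prop :=
  ∀ K : Submodule 𝕜 H, IsClosed (K : Set H) → (∀ g : G, ∀ x ∈ K, π g x ∈ K) →
    K = ⊥ ∨ K = ⊤

/-- A projection: a self-adjoint idempotent. -/
def IsProjection (p : H →L[𝕜] H) : Prop :=
  IsSelfAdjoint p ∧ p * p = p

/-- The reduction ideal of the projected cocycle `p·c`, viewed as a cocycle for the
subrepresentation of `π` on `pH`, whose commutant is identified with the corner
`p π(G)' p` (a von Neumann algebra with unit `p`). -/
def projReductionIdeal (π : G →* (H →L[𝕜] H)) (c : G → H) (p : H →L[𝕜] H) :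
    Set (H →L[𝕜] H) :=
  {T | T ∈ commutant π ∧ p * T = T ∧ T * p = T ∧
    ∃ ξ : H, p ξ = ξ ∧ ∀ g : G, T (c g) = ξ - π g ξ}

/-- The projected cocycle `p·c` is evanescent: its reduction ideal is dense, in the weak
operator topology, in the commutant of the subrepresentation on `pH` (the corner
`p π(G)' p`). -/
def ProjIsEvanescent (π : G →* (H →L[𝕜] H)) (c : G → H) (p : H →L[𝕜] H) : Prop :=
  {T | T ∈ commutant π ∧ p * T = T ∧ T * p = T} ⊆
    wotClosure 𝕜 (projReductionIdeal π c p)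

/-- The projected cocycle `p·c` is irreducible: its reduction ideal is `{0}`. -/
def ProjIsIrreducible (π : G →* (H →L[𝕜] H)) (c : G → H) (p : H →L[𝕜] H) : Prop :=
  projReductionIdeal π c p = {0}

/-- `G` is weak identity excluding (WIE): every irreducible unitary representation of `G`
on a separable complex Hilbert space that has almost invariant vectors is trivial. -/
def IsWIE (G : Type) [Group G] [TopologicalSpace G] [IsTopologicalGroup G] : Prop :=
  ∀ (H : Type) (_ : NormedAddCommGroup H) (_ : InnerProductSpace ℂ H)
    (_ : CompleteSpace H) (_ : TopologicalSpace.SeparableSpace H)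
    (π : G →* (H →L[ℂ] H)), IsUnitaryRep π → IsIrreducibleRep π →
      HasAlmostInvariantVectors π → ∀ g : G, π g = 1

lemma mem_wotClosure_self {S : Set (H →L[𝕜] H)} {T : H →L[𝕜] H} (h : T ∈ S) :
    T ∈ wotClosure 𝕜 S :=
  subset_closure (Set.mem_image_of_mem _ h)

lemma wotClosure_mono {S T : Set (H →L[𝕜] H)} (h : S ⊆ T) :
    wotClosure 𝕜 S ⊆ wotClosure 𝕜 T :=
  Set.preimage_mono (closure_mono (Set.image_mono h))

lemma mul_mem_commutant {π : G →* (H →L[𝕜] H)} {A B : H →L[𝕜] H}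
    (hA : A ∈ commutant π) (hB : B ∈ commutant π) : A * B ∈ commutant π := fun g => by
  rw [mul_assoc, hB g, ← mul_assoc, hA g, mul_assoc]

lemma continuous_wot_lmul (p : H →L[𝕜] H) :
    Continuous fun A : H →WOT[𝕜] H =>
      (ContinuousLinearMapWOT.ofCLM (p * ContinuousLinearMapWOT.toCLM A) : H →WOT[𝕜] H) := by
  refine ContinuousLinearMapWOT.continuous_of_dual_apply_continuous fun x y => ?_
  exact ContinuousLinearMapWOT.continuous_dual_apply x (y.comp p)

/-- The natural decomposition: if `p` is the projection with
`wot-closure I(c) = π(G)' p`, then `p·c` is evanescent, `(1-p)·c` is irreducible, and `p`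
dominates every projection `q ∈ π(G)'` with `q·c` evanescent. -/
theorem natural_decomposition
    (G : Type) [Group G] [TopologicalSpace G] [IsTopologicalGroup G]
    [LocallyCompactSpace G] [SecondCountableTopology G]
    (H : Type) [NormedAddCommGroup H] [InnerProductSpace ℂ H] [CompleteSpace H]
    [TopologicalSpace.SeparableSpace H]
    (π : G →* (H →L[ℂ] H)) (hπ : IsUnitaryRep π)
    (c : G → H) (hc : IsCocycle π c)
    (p : H →L[ℂ] H) (hpc : p ∈ commutant π) (hp : IsProjection p)
    (hclos : wotClosure ℂ (reductionIdeal π c) = (fun x => x * p) '' commutant π) :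
    ProjIsEvanescent π c p ∧ ProjIsIrreducible π c (1 - p) ∧
      ∀ q : H →L[ℂ] H, q ∈ commutant π → IsProjection q → ProjIsEvanescent π c q →
        q ≤ p := by
  obtain ⟨hpsa, hpp⟩ := hp
  -- every element of the reduction ideal is fixed by right multiplication by `p`
  have hSp : ∀ S ∈ reductionIdeal π c, S * p = S := by
    intro S hS
    have h1 : S ∈ wotClosure ℂ (reductionIdeal π c) := mem_wotClosure_self hS
    rw [hclos] at h1
    obtain ⟨A, -, rfl⟩ := h1
    show A * p * p = A * p
    rw [mul_assoc, hpp]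
  have hπp : ∀ g (ξ : H), p (π g ξ) = π g (p ξ) := by
    intro g ξ
    have := DFunLike.congr_fun (hpc g) ξ
    simpa [ContinuousLinearMap.mul_apply] using this
  refine ⟨?_, ?_, ?_⟩
  · -- Evanescence of p·c
    rintro T ⟨hTc, hpT, hTp⟩
    have h1 : T ∈ wotClosure ℂ (reductionIdeal π c) := by
      rw [hclos]; exact ⟨T, hTc, hTp⟩
    have hmaps : Set.MapsTo
        (fun A : H →WOT[ℂ] H =>
          (ContinuousLinearMapWOT.ofCLM (p * ContinuousLinearMapWOT.toCLM A) : H →WOT[ℂ] H))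
        ((ContinuousLinearMapWOT.ofCLM : (H →L[ℂ] H) → H →WOT[ℂ] H) '' reductionIdeal π c)
        ((ContinuousLinearMapWOT.ofCLM : (H →L[ℂ] H) → H →WOT[ℂ] H) '' projReductionIdeal π c p) := by
      rintro A ⟨S, hS, rfl⟩
      refine ⟨p * S, ?_, by simp⟩
      obtain ⟨hSc, ξ, hξ⟩ := hS
      refine ⟨mul_mem_commutant hpc hSc, by rw [← mul_assoc, hpp], ?_, p ξ, ?_, ?_⟩
      · rw [mul_assoc, hSp S ⟨hSc, ξ, hξ⟩]
      · show (p * p) ξ = p ξ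
        rw [hpp]
      · intro g
        show p (S (c g)) = p ξ - π g (p ξ)
        rw [show S (c g) = ξ - π g ξ from hξ g, map_sub, hπp]
    have h2 := map_mem_closure (continuous_wot_lmul p) h1 hmaps
    simp only [ContinuousLinearMapWOT.toCLM_ofCLM, hpT] at h2
    exact h2
  · -- Irreducibility of (1-p)·c
    ext T
    simp only [Set.mem_singleton_iff]
    constructor
    · rintro ⟨hTc, hT1, hT2, ξ, hξ, hco⟩
      have hRI : T ∈ reductionIdeal π c := ⟨hTc, ξ, hco⟩
      have h1 : T * p = T := hSp T hRI
      have h2 : T * p = 0 := by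
        have h4 := hT2
        rw [mul_sub, mul_one] at h4
        exact sub_eq_self.mp h4
      rw [← h1, h2]
    · rintro rfl
      refine ⟨fun g => by simp, by simp, by simp, 0, by simp, fun g => by simp⟩
  · -- Maximality
    intro q hqc ⟨hqsa, hqq⟩ hqe
    have hq1 : q ∈ wotClosure ℂ (projReductionIdeal π c q) := hqe ⟨hqc, hqq, hqq⟩
    have hsub : projReductionIdeal π c q ⊆ reductionIdeal π c := by
      rintro T ⟨hTc, -, -, ξ, -, hco⟩
      exact ⟨hTc, ξ, hco⟩
    have hq2 : q ∈ wotClosure ℂ (reductionIdeal π c) := wotClosure_mono hsub hq1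
    rw [hclos] at hq2
    obtain ⟨A, -, hA⟩ := hq2
    have hqp : q * p = q := by
      rw [← hA]; show A * p * p = A * p; rw [mul_assoc, hpp]
    have hpq : p * q = q := by
      have h1 : star (q * p) = star q := by rw [hqp]
      rwa [star_mul, hpsa, hqsa] at h1
    set r := p - q with hr
    have hrsa : IsSelfAdjoint r := hpsa.sub hqsa
    have hrr : r * r = r := by
      rw [hr, sub_mul, mul_sub, mul_sub, hpp, hpq, hqp, hqq]
      abel
    rw [ContinuousLinearMap.le_def]
    refine ⟨by simpa [hr] using ContinuousLinearMap.isSelfAdjoint_iff_isSymmetric.mp hrsa, fun x => ?_⟩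
    have h1 : r (r x) = r x := by
      have := DFunLike.congr_fun hrr x
      simpa [ContinuousLinearMap.mul_apply] using this
    have hsym := (ContinuousLinearMap.isSelfAdjoint_iff_isSymmetric.mp hrsa)
    have h3 := hsym (r x) x
    simp only [ContinuousLinearMap.coe_coe] at h3
    have h2 : (0:ℝ) ≤ RCLike.re (inner ℂ (r x) x : ℂ) := by
      rw [← h1, h3]
      exact inner_self_nonneg
    simpa [ContinuousLinearMap.reApplyInnerSelf, hr, inner_sub_left] using h2

end Evan
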